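/- The Veronese map pulls back the round metric to the Adler–Taylor metric: for every a ∈ A, the function x ↦ sqrt(λ_a(x)) is differentiable with directional derivative at x in direction u equal to sqrt(λ_a(x))·⟨a − μ(x), u⟩; consequently Σ_{a∈A} (D_x sqrt(λ_a)(u))² = g_x(u) for all x, u ∈ ℝ^m. -/

import Mathlib

open scoped BigOperators RealInnerProductSpace
open Finset

noncomputable section

/-- `ℝ^m` with the standard (Euclidean) inner product. -/
abbrev Vm (m : ℕ) := EuclideanSpace ℝ (Fin m)

/-- The diagonal covariance `K(x) = Σ_{a∈A} α_a² exp(2⟨a,x⟩)`. -/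
def covK {m : ℕ} (A : Finset (Vm m)) (α : Vm m → ℝ) (x : Vm m) : ℝ :=
  ∑ a ∈ A, (α a) ^ 2 * Real.exp (2 * ⟪a, x⟫)

/-- The potential `Φ(x) = (1/2) log K(x)`. -/
def pot {m : ℕ} (A : Finset (Vm m)) (α : Vm m → ℝ) (x : Vm m) : ℝ :=
  (1 / 2) * Real.log (covK A α x)

/-- The weights `λ_a(x) = α_a² exp(2⟨a,x⟩)/K(x)`. -/
def wt {m : ℕ} (A : Finset (Vm m)) (α : Vm m → ℝ) (a x : Vm m) : ℝ :=
  (α a) ^ 2 * Real.exp (2 * ⟪a, x⟫) / covK A α x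

/-- The moment map `μ(x) = Σ_{a∈A} λ_a(x) • a`. -/
def mmap {m : ℕ} (A : Finset (Vm m)) (α : Vm m → ℝ) (x : Vm m) : Vm m :=
  ∑ a ∈ A, wt A α a x • a

/-- The Adler–Taylor quadratic form `g_x(v) = Σ_{a∈A} λ_a(x)·⟨a − μ(x), v⟩²`. -/
def atForm {m : ℕ} (A : Finset (Vm m)) (α : Vm m → ℝ) (x v : Vm m) : ℝ :=
  ∑ a ∈ A, wt A α a x * ⟪a - mmap A α x, v⟫ ^ 2


/-- The Veronese map pulls back the round metric to the Adler–Taylor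
metric: each `x ↦ sqrt(λ_a(x))` is differentiable with differential
`v ↦ sqrt(λ_a(x))·⟨a − μ(x), v⟩`, and consequently
`Σ_{a∈A} (D_x sqrt(λ_a)(u))² = g_x(u)` for all `x, u`. -/
theorem statement11 (m : ℕ) (hm : 1 ≤ m) (A : Finset (Vm m)) (hA : A.Nonempty)
    (α : Vm m → ℝ) (hα : ∀ a ∈ A, 0 < α a) :
    (∀ a ∈ A, ∀ x : Vm m,
      HasFDerivAt (fun y => Real.sqrt (wt A α a y))
        (Real.sqrt (wt A α a x) • innerSL ℝ (a - mmap A α x)) x) ∧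
    (∀ x u : Vm m,
      ∑ a ∈ A, (fderiv ℝ (fun y => Real.sqrt (wt A α a y)) x u) ^ 2 = atForm A α x u) := by
  -- positivity of K
  have hK : ∀ x : Vm m, 0 < covK A α x := fun x =>
    Finset.sum_pos (fun a ha => mul_pos (pow_pos (hα a ha) 2) (Real.exp_pos _)) hA
  -- derivative of K
  have hKd : ∀ x : Vm m, HasFDerivAt (covK A α) ((2 * covK A α x) • innerSL ℝ (mmap A α x)) x := by
    intro x
    have h : HasFDerivAt (covK A α)
        (∑ a ∈ A, ((α a) ^ 2 • (Real.exp (2 * ⟪a, x⟫) • ((2:ℝ) • innerSL ℝ a)))) x := by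
      refine HasFDerivAt.fun_sum (fun a ha => ?_)
      have h1 : HasFDerivAt (fun y : Vm m => 2 * ⟪a, y⟫) ((2:ℝ) • innerSL ℝ a) x :=
        (innerSL ℝ a).hasFDerivAt.const_mul 2
      exact (h1.exp).const_mul _
    convert h using 1
    ext v
    simp only [ContinuousLinearMap.smul_apply, innerSL_apply_apply, ContinuousLinearMap.coe_sum',
      Finset.sum_apply, smul_eq_mul, mmap, sum_inner, real_inner_smul_left, wt]
    rw [Finset.mul_sum]
    refine Finset.sum_congr rfl (fun a ha => ?_)
    have hKx := (hK x).ne'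
    field_simp
  -- closed form of sqrt(wt)
  have hsq : ∀ a ∈ A, ∀ y : Vm m,
      Real.sqrt (wt A α a y) = α a * Real.exp ⟪a, y⟫ / Real.sqrt (covK A α y) := by
    intro a ha y
    have h1 : (α a) ^ 2 * Real.exp (2 * ⟪a, y⟫) = (α a * Real.exp ⟪a, y⟫) ^ 2 := by
      rw [mul_pow, ← Real.exp_nat_mul]
      norm_num [mul_comm]
    have hp : 0 ≤ α a * Real.exp ⟪a, y⟫ := mul_nonneg (hα a ha).le (Real.exp_pos _).le
    rw [wt, h1, Real.sqrt_div (sq_nonneg _), Real.sqrt_sq hp]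
  have part1 : ∀ a ∈ A, ∀ x : Vm m,
      HasFDerivAt (fun y => Real.sqrt (wt A α a y))
        (Real.sqrt (wt A α a x) • innerSL ℝ (a - mmap A α x)) x := by
    intro a ha x
    set s := Real.sqrt (covK A α x) with hs
    have hs0 : 0 < s := Real.sqrt_pos.2 (hK x)
    have hss : s ^ 2 = covK A α x := Real.sq_sqrt (hK x).le
    have hS : HasFDerivAt (fun y => Real.sqrt (covK A α y))
        ((1 / (2 * s)) • ((2 * covK A α x) • innerSL ℝ (mmap A α x))) x :=
      (hKd x).sqrt (hK x).ne'
    have hSinv : HasFDerivAt (fun y => (Real.sqrt (covK A α y))⁻¹)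
        ((-(s ^ 2)⁻¹) • ((1 / (2 * s)) • ((2 * covK A α x) • innerSL ℝ (mmap A α x)))) x :=
      (hasDerivAt_inv hs0.ne').comp_hasFDerivAt x hS
    have hE : HasFDerivAt (fun y : Vm m => α a * Real.exp ⟪a, y⟫)
        ((α a) • (Real.exp ⟪a, x⟫ • innerSL ℝ a)) x :=
      ((innerSL ℝ a).hasFDerivAt.exp).const_mul (α a)
    have hF := hE.mul hSinv
    have hfun : (fun y => Real.sqrt (wt A α a y))
        = fun y => (α a * Real.exp ⟪a, y⟫) * (Real.sqrt (covK A α y))⁻¹ := by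
      funext y; rw [hsq a ha y, div_eq_mul_inv]
    rw [hfun]
    refine hF.congr_fderiv (Eq.symm ?_)
    ext v
    have hw : Real.sqrt (wt A α a x) = α a * Real.exp ⟪a, x⟫ / s := hsq a ha x
    simp only [ContinuousLinearMap.smul_apply, ContinuousLinearMap.add_apply, innerSL_apply_apply,
      smul_eq_mul, hw, inner_sub_left, neg_mul]
    field_simp
    ring_nf
    rw [← hss]
    rw [Real.sqrt_sq hs0.le]
    field_simp
  refine ⟨part1, fun x u => ?_⟩
  rw [atForm]
  refine Finset.sum_congr rfl (fun a ha => ?_)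
  rw [(part1 a ha x).fderiv]
  have hw0 : 0 ≤ wt A α a x := div_nonneg (by positivity) (hK x).le
  simp only [ContinuousLinearMap.smul_apply, innerSL_apply_apply, smul_eq_mul]
  rw [mul_pow, Real.sq_sqrt hw0]
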